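/- For every integer m ≥ 0 and every integer ℓ ≥ 1, s_{m,ℓ} = ∑_{k=1}^{ℓ} S(ℓ,k) · k! · C(k-1, m), where S(ℓ,k) is the Stirling number of the second kind and C(k-1,m) is the binomial coefficient. -/

import Mathlib

/-- `IsBPA m ℓ f` : `f` encodes a barred preferential arrangement of `[ℓ]` with `m` bars.
Each element of `[ℓ]` is assigned a section (one of the `m + 1` sections determined by the
`m` bars) together with a rank inside its section (ties are allowed: elements of the same
section with the same rank form a block); within each section the set of ranks actually used
must be an initial segment `{0, …, t-1}`, so that `f` determines, for each section, an
ordered partition of the elements assigned to it into nonempty blocks. -/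
def IsBPA (m ℓ : ℕ) (f : Fin ℓ → Fin (m + 1) × Fin ℓ) : Prop :=
  ∀ x : Fin ℓ, ∀ r : Fin ℓ, r < (f x).2 → ∃ y : Fin ℓ, (f y).1 = (f x).1 ∧ (f y).2 = r

instance (m ℓ : ℕ) : DecidablePred (IsBPA m ℓ) := fun f => by unfold IsBPA; infer_instance

/-- `bpa m ℓ` : the number of barred preferential arrangements of `[ℓ]` with `m` bars.
In particular `bpa 0 ℓ` is the number of preferential arrangements of `[ℓ]`
(the Fubini / ordered Bell number `r_ℓ`). -/
def bpa (m ℓ : ℕ) : ℕ :=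
  Fintype.card { f : Fin ℓ → Fin (m + 1) × Fin ℓ // IsBPA m ℓ f }

/-- `IsSBPA m ℓ f` : `f` encodes a *special* barred preferential arrangement, i.e. a barred
preferential arrangement in which every section is nonempty. -/
def IsSBPA (m ℓ : ℕ) (f : Fin ℓ → Fin (m + 1) × Fin ℓ) : Prop :=
  IsBPA m ℓ f ∧ ∀ j : Fin (m + 1), ∃ x : Fin ℓ, (f x).1 = j

instance (m ℓ : ℕ) : DecidablePred (IsSBPA m ℓ) := fun f => by unfold IsSBPA; infer_instance

/-- `sbpa m ℓ` : the number of special barred preferential arrangements of `[ℓ]` with `m` bars. -/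
def sbpa (m ℓ : ℕ) : ℕ :=
  Fintype.card { f : Fin ℓ → Fin (m + 1) × Fin ℓ // IsSBPA m ℓ f }

/-- The Stirling numbers of the second kind, `S(n, k)`: the number of partitions of an
`n`-element set into `k` nonempty blocks. -/
def stirling2 : ℕ → ℕ → ℕ
  | 0, 0 => 1
  | 0, _ + 1 => 0
  | _ + 1, 0 => 0
  | n + 1, k + 1 => (k + 1) * stirling2 n (k + 1) + stirling2 n k


-- ===== auxiliary development =====

noncomputable instance fintypeSurj (α β : Type*) [Fintype α] [Fintype β] :
    Fintype {g : α → β // Function.Surjective g} := by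
  classical infer_instance

noncomputable def surjCard (l k : ℕ) : ℕ :=
  Fintype.card {g : Fin l → Fin k // Function.Surjective g}

def surjRecMap (l k : ℕ) :
    Fin (k+1) × ({g : Fin l → Fin (k+1) // Function.Surjective g} ⊕
        {g : Fin l → Fin k // Function.Surjective g}) →
      {g : Fin (l+1) → Fin (k+1) // Function.Surjective g} := fun ⟨v, gg⟩ =>
    match gg with
    | Sum.inl g => ⟨Fin.snoc g.1 v, by
        intro u
        rcases g.2 u with ⟨x, hx⟩
        exact ⟨x.castSucc, by simp [hx]⟩⟩
    | Sum.inr g => ⟨Fin.snoc (v.succAbove ∘ g.1) v, by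
        intro u
        rcases eq_or_ne u v with rfl | hu
        · exact ⟨Fin.last l, by simp⟩
        · rcases g.2 ((finSuccAboveEquiv v).symm ⟨u, hu⟩) with ⟨x, hx⟩
          refine ⟨x.castSucc, ?_⟩
          simp only [Fin.snoc_castSucc, Function.comp_apply, hx]
          exact congrArg Subtype.val ((finSuccAboveEquiv v).apply_symm_apply ⟨u, hu⟩)⟩

theorem surjRecMap_bij (l k : ℕ) : Function.Bijective (surjRecMap l k) := by
  constructor
  · rintro ⟨v, g⟩ ⟨v', g'⟩ h
    have h' := congrArg Subtype.val h
    have hv : v = v' := by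
      have := congrArg (fun F => F (Fin.last l)) h'
      rcases g with g | g <;> rcases g' with g' | g' <;>
        simpa [surjRecMap] using this
    subst hv
    rcases g with g | g <;> rcases g' with g' | g'
    · have hg : g.1 = g'.1 := by
        funext x
        have := congrArg (fun F => F x.castSucc) h'
        simpa [surjRecMap] using this
      simp [Subtype.ext hg]
    · exfalso
      have hr : g.1 = v.succAbove ∘ g'.1 := by
        funext x
        have := congrArg (fun F => F x.castSucc) h'
        simpa [surjRecMap] using this
      rcases g.2 v with ⟨x, hx⟩
      rw [hr] at hx
      exact v.succAbove_ne _ hx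
    · exfalso
      have hr : v.succAbove ∘ g.1 = g'.1 := by
        funext x
        have := congrArg (fun F => F x.castSucc) h'
        simpa [surjRecMap] using this
      rcases g'.2 v with ⟨x, hx⟩
      rw [← hr] at hx
      exact v.succAbove_ne _ hx
    · have hg : g.1 = g'.1 := by
        funext x
        have := congrArg (fun F => F x.castSucc) h'
        have h2 : v.succAbove (g.1 x) = v.succAbove (g'.1 x) := by
          simpa [surjRecMap] using this
        exact v.succAbove_right_injective h2
      simp [Subtype.ext hg]
  · classical
    rintro ⟨g, hg⟩
    set v := g (Fin.last l) with hv
    by_cases h : Function.Surjective (g ∘ Fin.castSucc)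
    · refine ⟨⟨v, Sum.inl ⟨_, h⟩⟩, ?_⟩
      apply Subtype.ext
      funext x
      simp only [surjRecMap]
      rcases Fin.eq_castSucc_or_eq_last x with ⟨y, rfl⟩ | rfl
      · simp
      · simp [hv]
    · have hmiss : ∀ x : Fin l, g x.castSucc ≠ v := by
        intro x he
        apply h
        intro u
        rcases hg u with ⟨y, hy⟩
        rcases Fin.eq_castSucc_or_eq_last y with ⟨y', rfl⟩ | rfl
        · exact ⟨y', hy⟩
        · exact ⟨x, by rw [Function.comp_apply, he]; rw [← hy]⟩
      refine ⟨⟨v, Sum.inr ⟨fun x => (finSuccAboveEquiv v).symm ⟨g x.castSucc, hmiss x⟩, ?_⟩⟩, ?_⟩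
      · intro u
        rcases hg (v.succAbove u) with ⟨y, hy⟩
        rcases Fin.eq_castSucc_or_eq_last y with ⟨y', rfl⟩ | rfl
        · refine ⟨y', ?_⟩
          rw [Equiv.symm_apply_eq]
          apply Subtype.ext
          rw [finSuccAboveEquiv_apply]
          exact hy
        · exact absurd (hv ▸ hy.symm) (v.succAbove_ne u)
      · apply Subtype.ext
        funext x
        simp only [surjRecMap]
        rcases Fin.eq_castSucc_or_eq_last x with ⟨y, rfl⟩ | rfl
        · simp only [Fin.snoc_castSucc, Function.comp_apply]
          exact congrArg Subtype.val ((finSuccAboveEquiv v).apply_symm_apply ⟨g y.castSucc, hmiss y⟩)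
        · simp [hv]

theorem surjCard_succ_succ (l k : ℕ) :
    surjCard (l+1) (k+1) = (k+1) * (surjCard l (k+1) + surjCard l k) := by
  classical
  have := Fintype.card_of_bijective (surjRecMap_bij l k)
  rw [surjCard, ← this]
  simp [surjCard, mul_comm]

theorem surjCard_eq (l k : ℕ) : surjCard l k = stirling2 l k * Nat.factorial k := by
  classical
  induction l generalizing k with
  | zero =>
    cases k with
    | zero =>
      rw [surjCard, stirling2]
      simp only [Nat.factorial_zero, one_mul]
      rw [Fintype.card_eq_one_iff]
      refine ⟨⟨fun x => x.elim0, fun u => u.elim0⟩, ?_⟩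
      rintro ⟨g, _⟩
      apply Subtype.ext; funext x; exact x.elim0
    | succ k =>
      rw [surjCard, stirling2]
      simp only [zero_mul]
      rw [Fintype.card_eq_zero_iff]
      constructor
      rintro ⟨g, hgs⟩
      rcases hgs 0 with ⟨x, _⟩
      exact x.elim0
  | succ l ih =>
    cases k with
    | zero =>
      rw [surjCard, stirling2]
      simp only [zero_mul]
      rw [Fintype.card_eq_zero_iff]
      constructor
      rintro ⟨g, _⟩
      exact (g 0).elim0
    | succ k =>
      rw [surjCard_succ_succ, ih, ih, stirling2]
      rw [Nat.factorial_succ]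
      ring

/-- Section of block `i` given bar set `B`: number of bars before block `i`. -/
def secB (B : Finset ℕ) (i : ℕ) : ℕ := (B.filter (· < i)).card

/-- Rank of block `i` within its section. -/
def rankB (B : Finset ℕ) (i : ℕ) : ℕ :=
  ((Finset.range i).filter fun r => secB B r = secB B i).card

theorem secB_zero (B : Finset ℕ) : secB B 0 = 0 := by
  simp [secB]

theorem secB_mono (B : Finset ℕ) {i j : ℕ} (h : i ≤ j) : secB B i ≤ secB B j := by
  apply Finset.card_le_card
  intro b hb
  simp only [Finset.mem_filter] at *
  exact ⟨hb.1, by omega⟩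

theorem secB_succ_mem (B : Finset ℕ) {i : ℕ} (h : i ∈ B) : secB B (i+1) = secB B i + 1 := by
  rw [secB, secB]
  have : B.filter (· < i + 1) = insert i (B.filter (· < i)) := by
    ext b
    simp only [Finset.mem_filter, Finset.mem_insert]
    constructor
    · rintro ⟨hb, hlt⟩
      rcases eq_or_ne b i with rfl | hne
      · exact Or.inl rfl
      · exact Or.inr ⟨hb, by omega⟩
    · rintro (rfl | ⟨hb, hlt⟩)
      · exact ⟨h, by omega⟩
      · exact ⟨hb, by omega⟩
  rw [this, Finset.card_insert_of_notMem (by simp)]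

theorem secB_succ_not_mem (B : Finset ℕ) {i : ℕ} (h : i ∉ B) : secB B (i+1) = secB B i := by
  rw [secB, secB]
  congr 1
  ext b
  simp only [Finset.mem_filter]
  constructor
  · rintro ⟨hb, hlt⟩
    refine ⟨hb, ?_⟩
    rcases eq_or_ne b i with rfl | hne
    · exact absurd hb h
    · omega
  · rintro ⟨hb, hlt⟩
    exact ⟨hb, by omega⟩

theorem rankB_zero (B : Finset ℕ) : rankB B 0 = 0 := by simp [rankB]

theorem rankB_le (B : Finset ℕ) (i : ℕ) : rankB B i ≤ i := by
  calc rankB B i ≤ (Finset.range i).card := Finset.card_filter_le _ _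
  _ = i := Finset.card_range i

theorem rankB_succ_mem (B : Finset ℕ) {i : ℕ} (h : i ∈ B) : rankB B (i+1) = 0 := by
  rw [rankB, Finset.card_eq_zero]
  rw [Finset.filter_eq_empty_iff]
  intro r hr
  rw [Finset.mem_range] at hr
  have h1 : secB B r ≤ secB B i := secB_mono B (by omega)
  rw [secB_succ_mem B h]
  omega

theorem rankB_succ_not_mem (B : Finset ℕ) {i : ℕ} (h : i ∉ B) :
    rankB B (i+1) = rankB B i + 1 := by
  rw [rankB, rankB, secB_succ_not_mem B h, Finset.range_add_one, Finset.filter_insert,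
    if_pos rfl, Finset.card_insert_of_notMem (by simp)]

/-- Moving back `d ≤ rank` steps stays in the same section and decreases rank by `d`. -/
theorem rankB_sub (B : Finset ℕ) (i : ℕ) :
    ∀ d, d ≤ rankB B i → secB B (i - d) = secB B i ∧ rankB B (i - d) = rankB B i - d := by
  intro d
  induction d with
  | zero => intro _; simp
  | succ d ih =>
    intro hd
    obtain ⟨hs, hr⟩ := ih (by omega)
    have hpos : 1 ≤ rankB B (i - d) := by omega
    have hid : 1 ≤ i - d := by
      by_contra h
      have : i - d = 0 := by omega
      rw [this, rankB_zero] at hpos; omega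
    obtain ⟨q, hq⟩ : ∃ q, i - d = q + 1 := ⟨i - d - 1, by omega⟩
    have hqB : q ∉ B := by
      intro hmem
      rw [hq, rankB_succ_mem B hmem] at hpos; omega
    have h1 : secB B (i - (d+1)) = secB B (i-d) := by
      have : i - (d+1) = q := by omega
      rw [this, ← secB_succ_not_mem B hqB, ← hq]
    have h2 : rankB B (i-d) = rankB B (i - (d+1)) + 1 := by
      have hq' : i - (d+1) = q := by omega
      rw [hq, hq', rankB_succ_not_mem B hqB]
    constructor
    · rw [h1, hs]
    · omega

/-- Intermediate value: every section value up to `secB B n` is attained. -/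
theorem secB_surj (B : Finset ℕ) (n : ℕ) :
    ∀ s, s ≤ secB B n → ∃ i, i ≤ n ∧ secB B i = s := by
  induction n with
  | zero => intro s hs; rw [secB_zero] at hs; exact ⟨0, le_refl 0, by rw [secB_zero]; omega⟩
  | succ n ih =>
    intro s hs
    by_cases h : s ≤ secB B n
    · obtain ⟨i, hi, hsi⟩ := ih s h
      exact ⟨i, by omega, hsi⟩
    · refine ⟨n+1, le_refl _, ?_⟩
      by_cases hm : n ∈ B
      · rw [secB_succ_mem B hm]; rw [secB_succ_mem B hm] at hs; omega
      · rw [secB_succ_not_mem B hm] at hs; omega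

/-- Code strictly increases. -/
theorem codeB_lt (B : Finset ℕ) (L i : ℕ) (hi : i < L) :
    secB B i * L + rankB B i < secB B (i+1) * L + rankB B (i+1) := by
  by_cases hm : i ∈ B
  · rw [secB_succ_mem B hm, rankB_succ_mem B hm]
    have := rankB_le B i
    nlinarith
  · rw [secB_succ_not_mem B hm, rankB_succ_not_mem B hm]
    omega

theorem secB_card (B : Finset ℕ) (n : ℕ) (h : ∀ b ∈ B, b < n) : secB B n = B.card := by
  rw [secB]
  congr 1
  rw [Finset.filter_eq_self]
  intro b hb
  simpa using h b hb

theorem secB_le_card (B : Finset ℕ) (n : ℕ) : secB B n ≤ B.card :=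
  Finset.card_filter_le _ _

/-- The target data type: number of gaps `j` (so `j+1` blocks), a surjection onto the
blocks, and a set of `m` bar positions among the `j` gaps. -/
def BData (m ℓ : ℕ) : Type :=
  Σ j : Fin ℓ, {g : Fin ℓ → Fin (j.val + 1) // Function.Surjective g} ×
    {B : Finset (Fin j.val) // B.card = m}

def BData.bars {m ℓ : ℕ} (t : BData m ℓ) : Finset ℕ := t.2.2.1.image Fin.val

theorem BData.bars_card {m ℓ : ℕ} (t : BData m ℓ) : t.bars.card = m := by
  rw [BData.bars, Finset.card_image_of_injective _ Fin.val_injective, t.2.2.2]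

theorem BData.bars_lt {m ℓ : ℕ} (t : BData m ℓ) : ∀ b ∈ t.bars, b < t.1.val := by
  intro b hb
  rw [BData.bars, Finset.mem_image] at hb
  rcases hb with ⟨a, _, rfl⟩
  exact a.isLt

def toF (m ℓ : ℕ) (t : BData m ℓ) : Fin ℓ → Fin (m + 1) × Fin ℓ := fun x =>
  (⟨secB t.bars (t.2.1.1 x).val, by
      have h1 : secB t.bars (t.2.1.1 x).val ≤ t.bars.card := secB_le_card _ _
      rw [t.bars_card] at h1; omega⟩,
   ⟨rankB t.bars (t.2.1.1 x).val, by
      have h1 := rankB_le t.bars (t.2.1.1 x).val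
      have h2 : (t.2.1.1 x).val < t.1.val + 1 := (t.2.1.1 x).isLt
      have h3 : t.1.val < ℓ := t.1.isLt
      omega⟩)

theorem toF_isSBPA (m ℓ : ℕ) (t : BData m ℓ) : IsSBPA m ℓ (toF m ℓ t) := by
  obtain ⟨j, ⟨g, hg⟩, ⟨B, hB⟩⟩ := t
  set t : BData m ℓ := ⟨j, ⟨g, hg⟩, ⟨B, hB⟩⟩ with ht
  constructor
  · intro x r hr
    have hr' : r.val < rankB t.bars (g x).val := hr
    obtain ⟨hs, hrk⟩ := rankB_sub t.bars (g x).val (rankB t.bars (g x).val - r.val) (by omega)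
    set i : ℕ := (g x).val - (rankB t.bars (g x).val - r.val) with hi
    have hile : i < j.val + 1 := by
      have := (g x).isLt
      omega
    obtain ⟨y, hy⟩ := hg ⟨i, hile⟩
    refine ⟨y, ?_, ?_⟩
    · show (⟨secB t.bars (g y).val, _⟩ : Fin (m+1)) = ⟨secB t.bars (g x).val, _⟩
      apply Fin.ext
      show secB t.bars (g y).val = secB t.bars (g x).val
      rw [hy]
      exact hs
    · show (⟨rankB t.bars (g y).val, _⟩ : Fin ℓ) = r
      apply Fin.ext
      show rankB t.bars (g y).val = r.val
      rw [hy]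
      show rankB t.bars i = r.val
      rw [hi] at hrk ⊢
      have := rankB_le t.bars (g x).val
      omega
  · intro s
    have hlast : secB t.bars j.val = m := by
      rw [secB_card t.bars j.val t.bars_lt, t.bars_card]
    obtain ⟨i, hij, hsi⟩ := secB_surj t.bars j.val s.val (by rw [hlast]; omega)
    obtain ⟨x, hx⟩ := hg ⟨i, by omega⟩
    refine ⟨x, ?_⟩
    apply Fin.ext
    show secB t.bars (g x).val = s.val
    rw [hx]
    exact hsi

-- codes
theorem code_inj {L s r s' r' : ℕ} (hr : r < L) (hr' : r' < L)
    (h : s * L + r = s' * L + r') : s = s' ∧ r = r' := by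
  rcases lt_trichotomy s s' with hlt | rfl | hlt
  · exfalso; nlinarith
  · omega
  · exfalso; nlinarith

def codeF {m ℓ : ℕ} (p : Fin (m+1) × Fin ℓ) : ℕ := p.1.val * ℓ + p.2.val

def cB {m ℓ : ℕ} (t : BData m ℓ) : Fin (t.1.val + 1) → ℕ := fun i =>
  secB t.bars i.val * ℓ + rankB t.bars i.val

theorem cB_strictMono {m ℓ : ℕ} (t : BData m ℓ) : StrictMono (cB t) := by
  rw [Fin.strictMono_iff_lt_succ]
  intro i
  exact codeB_lt t.bars ℓ i.val (by have := i.isLt; have := t.1.isLt; omega)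

theorem codeF_toF {m ℓ : ℕ} (t : BData m ℓ) (x : Fin ℓ) :
    codeF (toF m ℓ t x) = cB t (t.2.1.1 x) := rfl

theorem toF_injective (m ℓ : ℕ) : Function.Injective (toF m ℓ) := by
  intro t t' h
  obtain ⟨j, ⟨g, hg⟩, ⟨B, hB⟩⟩ := t
  obtain ⟨j', ⟨g', hg'⟩, ⟨B', hB'⟩⟩ := t'
  set t : BData m ℓ := ⟨j, ⟨g, hg⟩, ⟨B, hB⟩⟩ with ht
  set t' : BData m ℓ := ⟨j', ⟨g', hg'⟩, ⟨B', hB'⟩⟩ with ht'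
  -- the common finset of codes
  set S : Finset ℕ := Finset.univ.image (fun x => codeF (toF m ℓ t x)) with hS
  have hmem : ∀ i, cB t i ∈ S := by
    intro i
    obtain ⟨x, hx⟩ := hg i
    rw [hS, Finset.mem_image]
    exact ⟨x, Finset.mem_univ x, by rw [codeF_toF]; show cB t (g x) = cB t i; rw [hx]⟩
  have hmem' : ∀ i, cB t' i ∈ S := by
    intro i
    obtain ⟨x, hx⟩ := hg' i
    rw [hS, Finset.mem_image]
    refine ⟨x, Finset.mem_univ x, ?_⟩
    rw [h, codeF_toF]
    show cB t' (g' x) = cB t' i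
    rw [hx]
  have hScard : S.card = j.val + 1 := by
    rw [hS]
    have himg : Finset.univ.image (fun x => codeF (toF m ℓ t x)) =
        Finset.univ.image (cB t) := by
      apply Finset.Subset.antisymm
      · intro c hc
        rw [Finset.mem_image] at hc ⊢
        rcases hc with ⟨x, _, rfl⟩
        exact ⟨g x, Finset.mem_univ _, (codeF_toF t x).symm⟩
      · intro c hc
        rw [Finset.mem_image] at hc ⊢
        rcases hc with ⟨i, _, rfl⟩
        obtain ⟨x, hx⟩ := hg i
        exact ⟨x, Finset.mem_univ _, by rw [codeF_toF]; show cB t (g x) = cB t i; rw [hx]⟩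
    rw [himg, Finset.card_image_of_injective _ (cB_strictMono t).injective]
    simp
    rfl
  have hScard' : S.card = j'.val + 1 := by
    have himg : S = Finset.univ.image (cB t') := by
      apply Finset.Subset.antisymm
      · intro c hc
        rw [hS, Finset.mem_image] at hc
        rcases hc with ⟨x, _, rfl⟩
        rw [h, codeF_toF]
        exact Finset.mem_image_of_mem _ (Finset.mem_univ _)
      · intro c hc
        rw [Finset.mem_image] at hc
        rcases hc with ⟨i, _, rfl⟩
        exact hmem' i
    rw [himg, Finset.card_image_of_injective _ (cB_strictMono t').injective]
    simp
    rfl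
  have hj : j = j' := by
    apply Fin.ext
    omega
  subst hj
  have hcB : cB t = cB t' := by
    have h1 := Finset.orderEmbOfFin_unique hScard hmem (cB_strictMono t)
    have h2 := Finset.orderEmbOfFin_unique hScard hmem' (cB_strictMono t')
    rw [h1, h2]
  -- recover secB/rankB equality at each index
  have hsec : ∀ i : Fin (j.val + 1), secB t.bars i.val = secB t'.bars i.val ∧
      rankB t.bars i.val = rankB t'.bars i.val := by
    intro i
    have := congrFun hcB i
    rw [cB, cB] at this
    refine code_inj ?_ ?_ this
    · have := rankB_le t.bars i.val
      have := i.isLt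
      have := j.isLt
      omega
    · have := rankB_le t'.bars i.val
      have := i.isLt
      have := j.isLt
      omega
  have hBeq : B = B' := by
    ext b
    have hmemiff : ∀ (C : Finset ℕ) (hb : ∀ c ∈ C, c < j.val), (b.val ∈ C ↔
        secB C (b.val + 1) = secB C b.val + 1) := by
      intro C hb
      constructor
      · intro hbc; exact secB_succ_mem C hbc
      · intro hs
        by_contra hbc
        rw [secB_succ_not_mem C hbc] at hs
        omega
    have e1 : b ∈ B ↔ b.val ∈ t.bars := by
      rw [BData.bars]
      simp only [Finset.mem_image]
      constructor
      · intro hb; exact ⟨b, hb, rfl⟩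
      · rintro ⟨a, ha, hav⟩
        rwa [← Fin.val_injective hav]
    have e1' : b ∈ B' ↔ b.val ∈ t'.bars := by
      rw [BData.bars]
      simp only [Finset.mem_image]
      constructor
      · intro hb; exact ⟨b, hb, rfl⟩
      · rintro ⟨a, ha, hav⟩
        rwa [← Fin.val_injective hav]
    rw [e1, e1', hmemiff t.bars t.bars_lt, hmemiff t'.bars t'.bars_lt]
    have hb1 := (hsec ⟨b.val + 1, by have := b.isLt; omega⟩).1
    have hb0 := (hsec ⟨b.val, by have := b.isLt; omega⟩).1
    simp only at hb1 hb0
    rw [hb1, hb0]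
  have hgeq : g = g' := by
    funext x
    have h1 : cB t (g x) = cB t' (g' x) := by
      rw [← codeF_toF, ← codeF_toF, h]
    rw [← hcB] at h1
    exact (cB_strictMono t).injective h1
  rw [ht, ht']
  subst hBeq
  subst hgeq
  rfl

theorem toF_surjective (m ℓ : ℕ) (hℓ : 1 ≤ ℓ) (f : Fin ℓ → Fin (m + 1) × Fin ℓ)
    (hf : IsSBPA m ℓ f) : ∃ t : BData m ℓ, toF m ℓ t = f := by
  classical
  obtain ⟨hbpa, hsecs⟩ := hf
  -- initial segment property, in terms of values
  have hinit : ∀ x : Fin ℓ, ∀ r' : ℕ, r' ≤ (f x).2.val →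
      ∃ y, (f y).1 = (f x).1 ∧ (f y).2.val = r' := by
    intro x r' hr'
    rcases eq_or_lt_of_le hr' with heq | hlt
    · exact ⟨x, rfl, heq.symm⟩
    · obtain ⟨y, hy1, hy2⟩ := hbpa x ⟨r', by have := (f x).2.isLt; omega⟩ hlt
      exact ⟨y, hy1, by rw [hy2]⟩
  -- each section has a rank-0 element
  have hsec0 : ∀ s : ℕ, s ≤ m → ∃ x, (f x).1.val = s ∧ (f x).2.val = 0 := by
    intro s hs
    obtain ⟨x, hx⟩ := hsecs ⟨s, by omega⟩
    obtain ⟨y, hy1, hy2⟩ := hinit x 0 (Nat.zero_le _)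
    exact ⟨y, by rw [hy1, hx], hy2⟩
  set U : Finset ℕ := Finset.univ.image (fun x => codeF (f x)) with hU
  set k : ℕ := U.card with hk
  have hUmem : ∀ u ∈ U, ∃ x, codeF (f x) = u := by
    intro u hu
    rw [hU, Finset.mem_image] at hu
    rcases hu with ⟨x, _, hx⟩
    exact ⟨x, hx⟩
  have hUmem' : ∀ x, codeF (f x) ∈ U := fun x =>
    Finset.mem_image_of_mem _ (Finset.mem_univ x)
  have hk1 : 1 ≤ k := by
    rw [hk, hU]
    have : (Finset.univ : Finset (Fin ℓ)).Nonempty := ⟨⟨0, hℓ⟩, Finset.mem_univ _⟩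
    exact Finset.card_pos.mpr (this.image _)
  have hkl : k ≤ ℓ := by
    rw [hk, hU]
    calc (Finset.univ.image fun x => codeF (f x)).card ≤ (Finset.univ : Finset (Fin ℓ)).card :=
          Finset.card_image_le
    _ = ℓ := by simp
  set e : Fin k ↪o ℕ := U.orderEmbOfFin rfl with he
  set eN : ℕ → ℕ := fun n => if h : n < k then e ⟨n, h⟩ else 0 with heN
  have heNmem : ∀ n, n < k → eN n ∈ U := by
    intro n hn
    rw [heN]
    simp only [dif_pos hn]
    exact Finset.orderEmbOfFin_mem U rfl _
  have heNmono : ∀ a b, a < b → b < k → eN a < eN b := by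
    intro a b hab hb
    rw [heN]
    simp only [dif_pos hb, dif_pos (lt_trans hab hb)]
    exact e.strictMono (by exact hab)
  -- no element of U strictly between consecutive values of e
  have hconsec : ∀ n, n + 1 < k → ∀ u ∈ U, u ≤ eN n ∨ eN (n+1) ≤ u := by
    intro n hn u hu
    have := Finset.range_orderEmbOfFin U (rfl : U.card = k)
    have hu' : u ∈ Set.range e := by rw [this]; exact hu
    rcases hu' with ⟨t, rfl⟩
    rcases le_or_gt t.val n with hle | hlt
    · left
      rw [heN]; simp only [dif_pos hn, dif_pos (by omega : n < k)]
      exact e.monotone (Fin.le_def.mpr (by simpa using hle))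
    · right
      rw [heN]; simp only [dif_pos hn]
      exact e.monotone (Fin.le_def.mpr (by simpa using hlt))
  have heN0 : eN 0 = 0 := by
    obtain ⟨x0, hx1, hx2⟩ := hsec0 0 (Nat.zero_le m)
    have h0U : 0 ∈ U := by
      have : codeF (f x0) = 0 := by rw [codeF, hx1, hx2]; ring
      rw [← this]; exact hUmem' x0
    have hle : eN 0 ≤ 0 := by
      rw [heN]
      simp only [dif_pos (by omega : 0 < k)]
      rw [Finset.orderEmbOfFin_zero rfl (by omega : 0 < k)]
      exact Finset.min'_le U 0 h0U
    omega
  -- decode: each element of U decodes uniquely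
  have hdecode : ∀ u ∈ U, ∃ s r, u = s * ℓ + r ∧ s ≤ m ∧ r < ℓ ∧
      ∃ x, (f x).1.val = s ∧ (f x).2.val = r := by
    intro u hu
    obtain ⟨x, hx⟩ := hUmem u hu
    exact ⟨(f x).1.val, (f x).2.val, by rw [← hx]; rfl,
      by have := (f x).1.isLt; omega, (f x).2.isLt, x, rfl, rfl⟩
  -- the successor structure
  have hstep : ∀ n, n + 1 < k →
      ∀ s r s' r', eN n = s * ℓ + r → eN (n+1) = s' * ℓ + r' →
      s ≤ m → r < ℓ → s' ≤ m → r' < ℓ →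
      (s' = s ∧ r' = r + 1) ∨ (s' = s + 1 ∧ r' = 0) := by
    intro n hn s r s' r' hcn hcn' hsm hrl hsm' hrl'
    have hlt : eN n < eN (n+1) := heNmono n (n+1) (by omega) hn
    -- s ≤ s'
    have hss' : s ≤ s' := by
      by_contra hcon
      push_neg at hcon
      have h1 : (s' + 1) * ℓ ≤ s * ℓ := Nat.mul_le_mul_right ℓ (by omega)
      have h2 : (s' + 1) * ℓ = s' * ℓ + ℓ := by ring
      omega
    rcases eq_or_lt_of_le hss' with rfl | hslt
    · -- same section
      left
      have hrr' : r < r' := by omega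
      refine ⟨rfl, ?_⟩
      by_contra hcon
      have hr1 : r + 1 < r' := by omega
      -- find element with pair (s, r+1)
      obtain ⟨x', hx'⟩ := hUmem (eN (n+1)) (heNmem _ hn)
      have hx's : (f x').1.val = s ∧ (f x').2.val = r' := by
        have : (f x').1.val * ℓ + (f x').2.val = s * ℓ + r' := by rw [← hcn', ← hx']; rfl
        exact code_inj (f x').2.isLt hrl' this
      obtain ⟨y, hy1, hy2⟩ := hinit x' (r+1) (by omega)
      have hyU : s * ℓ + (r + 1) ∈ U := by
        have : codeF (f y) = s * ℓ + (r+1) := by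
          rw [codeF, hy2, hy1, hx's.1]
        rw [← this]; exact hUmem' y
      rcases hconsec n hn _ hyU with hle | hge
      · rw [hcn] at hle; omega
      · rw [hcn'] at hge; omega
    · -- new section
      right
      have hs1m : s + 1 ≤ m := by omega
      obtain ⟨y, hy1, hy2⟩ := hsec0 (s+1) hs1m
      have hyU : (s+1) * ℓ ∈ U := by
        have : codeF (f y) = (s+1) * ℓ := by rw [codeF, hy1, hy2]; ring
        rw [← this]; exact hUmem' y
      rcases hconsec n hn _ hyU with hle | hge
      · rw [hcn] at hle
        have h2 : (s + 1) * ℓ = s * ℓ + ℓ := by ring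
        omega
      · rw [hcn'] at hge
        have h1 : (s + 1) * ℓ ≤ s' * ℓ := Nat.mul_le_mul_right ℓ (by omega)
        have heq : s' * ℓ + r' = (s + 1) * ℓ + 0 := by omega
        have := code_inj hrl' (by omega : 0 < ℓ) heq
        omega
  -- bars
  set Bf : Finset ℕ := (Finset.range (k-1)).filter (fun i => eN (i+1) % ℓ = 0) with hBf
  have hBflt : ∀ b ∈ Bf, b < k - 1 := by
    intro b hb
    rw [hBf, Finset.mem_filter, Finset.mem_range] at hb
    exact hb.1
  -- main invariant
  have hmain : ∀ n, n < k → eN n = secB Bf n * ℓ + rankB Bf n := by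
    intro n
    induction n with
    | zero => intro _; rw [heN0, secB_zero, rankB_zero]; ring
    | succ n ih =>
      intro hn
      have ihn := ih (by omega)
      obtain ⟨s, r, hsr, hsm, hrl, _⟩ := hdecode (eN n) (heNmem n (by omega))
      obtain ⟨s', r', hsr', hsm', hrl', _⟩ := hdecode (eN (n+1)) (heNmem (n+1) hn)
      have hrankn : rankB Bf n < ℓ := by
        have := rankB_le Bf n; omega
      have hcomp : s = secB Bf n ∧ r = rankB Bf n :=
        code_inj hrl hrankn (by rw [← hsr, ihn])
      rcases hstep n hn s r s' r' hsr hsr' hsm hrl hsm' hrl' with ⟨hs', hr'⟩ | ⟨hs', hr'⟩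
      · -- same section : n ∉ Bf
        have hnotmem : n ∉ Bf := by
          rw [hBf, Finset.mem_filter]
          rintro ⟨-, hmod⟩
          rw [hsr', hr'] at hmod
          have h2 : (s' * ℓ + (r + 1)) % ℓ = (r + 1) % ℓ := by
            rw [Nat.add_comm, Nat.add_mul_mod_self_right]
          rw [h2, Nat.mod_eq_of_lt (by omega : r + 1 < ℓ)] at hmod
          omega
        rw [secB_succ_not_mem Bf hnotmem, rankB_succ_not_mem Bf hnotmem]
        rw [hsr', hs', hr', hcomp.1, hcomp.2]
        try ring
      · -- new section : n ∈ Bf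
        have hmem : n ∈ Bf := by
          rw [hBf, Finset.mem_filter, Finset.mem_range]
          refine ⟨by omega, ?_⟩
          rw [hsr', hr']
          simp [Nat.mul_mod_left]
        rw [secB_succ_mem Bf hmem, rankB_succ_mem Bf hmem]
        rw [hsr', hs', hr', hcomp.1]
        try ring
  -- the last section is m, so Bf.card = m
  have hBfcard : Bf.card = m := by
    have hlast := hmain (k-1) (by omega)
    have hseclast : secB Bf (k-1) = Bf.card := secB_card Bf (k-1) hBflt
    obtain ⟨s0, r0, hsr0, hsm0, hrl0, _⟩ := hdecode (eN (k-1)) (heNmem (k-1) (by omega))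
    have hrank : rankB Bf (k-1) < ℓ := by have := rankB_le Bf (k-1); omega
    have hcomp : s0 = secB Bf (k-1) ∧ r0 = rankB Bf (k-1) :=
      code_inj hrl0 hrank (by rw [← hsr0, hlast])
    -- there is an element with section m, its code is ≤ eN (k-1)
    obtain ⟨xm, hxm1, hxm2⟩ := hsec0 m (le_refl m)
    have hmU : codeF (f xm) ∈ U := hUmem' xm
    have hmax : codeF (f xm) ≤ eN (k-1) := by
      have := Finset.range_orderEmbOfFin U (rfl : U.card = k)
      have hm' : codeF (f xm) ∈ Set.range e := by rw [this]; exact hmU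
      rcases hm' with ⟨t, ht⟩
      rw [← ht, heN]
      simp only [dif_pos (by omega : k - 1 < k)]
      have htk : t.val ≤ k - 1 := by have := t.isLt; omega
      exact e.monotone (Fin.le_def.mpr (by simpa using htk))
    have hge : m * ℓ ≤ eN (k-1) := by
      have : codeF (f xm) = m * ℓ + (f xm).2.val := by rw [codeF, hxm1]
      omega
    have hsge : m ≤ s0 := by
      by_contra hcon
      push_neg at hcon
      rw [hsr0] at hge
      have h1 : (s0 + 1) * ℓ ≤ m * ℓ := Nat.mul_le_mul_right ℓ (by omega)
      have h2 : (s0 + 1) * ℓ = s0 * ℓ + ℓ := by ring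
      omega
    have : s0 = m := by omega
    omega
  -- assemble the data
  have hk1l : k - 1 < ℓ := by omega
  set j : Fin ℓ := ⟨k - 1, hk1l⟩ with hj
  have hjval : j.val = k - 1 := rfl
  have hkj : k - 1 + 1 = k := by omega
  set gi : Fin ℓ → Fin k := fun x => (U.orderIsoOfFin rfl).symm ⟨codeF (f x), hUmem' x⟩
    with hgi
  have hgie : ∀ x, eN (gi x).val = codeF (f x) := by
    intro x
    rw [heN]
    simp only [dif_pos (gi x).isLt]
    have h1 : (⟨(gi x).val, (gi x).isLt⟩ : Fin k) = gi x := rfl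
    rw [h1, hgi]
    have := (U.orderIsoOfFin rfl).apply_symm_apply ⟨codeF (f x), hUmem' x⟩
    have h2 := congrArg Subtype.val this
    rw [← Finset.coe_orderIsoOfFin_apply]
    exact h2
  set g : Fin ℓ → Fin (j.val + 1) := fun x => ⟨(gi x).val, by
    have h1 := (gi x).isLt
    have h2 : j.val = k - 1 := rfl
    omega⟩ with hg
  have hgsurj : Function.Surjective g := by
    intro i
    have hival : i.val < k := by have := i.isLt; omega
    have hmemi : e ⟨i.val, hival⟩ ∈ U := Finset.orderEmbOfFin_mem U rfl _
    obtain ⟨x, hx⟩ := hUmem _ hmemi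
    refine ⟨x, ?_⟩
    have : gi x = ⟨i.val, hival⟩ := by
      show (U.orderIsoOfFin (rfl : U.card = k)).symm ⟨codeF (f x), hUmem' x⟩ = ⟨i.val, hival⟩
      rw [OrderIso.symm_apply_eq]
      apply Subtype.ext
      rw [Finset.coe_orderIsoOfFin_apply]
      show codeF (f x) = e ⟨i.val, hival⟩
      exact hx
    rw [hg]
    apply Fin.ext
    simp only [this]
  set Bfin : Finset (Fin j.val) := Bf.attachFin (by rw [hjval]; exact hBflt) with hBfin
  have hBfincard : Bfin.card = m := by
    rw [hBfin, Finset.card_attachFin, hBfcard]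
  set t : BData m ℓ := ⟨j, ⟨g, hgsurj⟩, ⟨Bfin, hBfincard⟩⟩ with htt
  have hbars : t.bars = Bf := by
    show Bfin.image Fin.val = Bf
    rw [hBfin]
    ext b
    simp only [Finset.mem_image, Finset.mem_attachFin]
    constructor
    · rintro ⟨a, ha, rfl⟩
      exact ha
    · intro hb
      have hblt : b < j.val := by rw [hjval]; exact hBflt b hb
      exact ⟨⟨b, hblt⟩, hb, rfl⟩
  refine ⟨t, ?_⟩
  funext x
  have hn : (g x).val < k := by rw [hg]; exact (gi x).isLt
  have hmx := hmain (g x).val hn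
  have hgx : eN (g x).val = codeF (f x) := by rw [hg]; exact hgie x
  have hcode : (f x).1.val * ℓ + (f x).2.val = secB Bf (g x).val * ℓ + rankB Bf (g x).val := by
    rw [← hmx, hgx]; rfl
  have hrank : rankB Bf (g x).val < ℓ := by
    have := rankB_le Bf (g x).val; omega
  have hcomp := code_inj (f x).2.isLt hrank hcode
  refine Prod.ext (Fin.ext ?_) (Fin.ext ?_)
  · show secB t.bars (g x).val = (f x).1.val
    rw [hbars]
    exact hcomp.1.symm
  · show rankB t.bars (g x).val = (f x).2.val
    rw [hbars]
    exact hcomp.2.symm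

noncomputable instance (m ℓ : ℕ) : Fintype (BData m ℓ) := by
  unfold BData; infer_instance

/-- For every `m ≥ 0` and `ℓ ≥ 1`,
`s_{m,ℓ} = ∑_{k=1}^{ℓ} S(ℓ,k) · k! · C(k-1, m)`. -/
theorem sbpa_eq_sum_stirling2 (m ℓ : ℕ) (hℓ : 1 ≤ ℓ) :
    sbpa m ℓ =
      ∑ k ∈ Finset.Icc 1 ℓ, stirling2 ℓ k * Nat.factorial k * Nat.choose (k - 1) m := by
  classical
  have hbij : Function.Bijective
      (fun t : BData m ℓ => (⟨toF m ℓ t, toF_isSBPA m ℓ t⟩ :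
        { f : Fin ℓ → Fin (m + 1) × Fin ℓ // IsSBPA m ℓ f })) := by
    constructor
    · intro t t' h
      exact toF_injective m ℓ (congrArg Subtype.val h)
    · rintro ⟨f, hf⟩
      obtain ⟨t, ht⟩ := toF_surjective m ℓ hℓ f hf
      exact ⟨t, Subtype.ext ht⟩
  have h1 : sbpa m ℓ = Fintype.card (BData m ℓ) := by
    rw [sbpa]
    rw [← Fintype.card_of_bijective hbij]
  have h2 : Fintype.card (BData m ℓ) =
      ∑ j : Fin ℓ, surjCard ℓ (j.val + 1) * Nat.choose j.val m := by
    have hc : Fintype.card (BData m ℓ) = Fintype.card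
        (Σ j : Fin ℓ, {g : Fin ℓ → Fin (j.val + 1) // Function.Surjective g} ×
          {B : Finset (Fin j.val) // B.card = m}) := Fintype.card_congr (Equiv.refl (BData m ℓ))
    rw [hc, Fintype.card_sigma]
    apply Finset.sum_congr rfl
    intro j _
    rw [Fintype.card_prod, Fintype.card_finset_len, Fintype.card_fin]
    congr 1
  rw [h1, h2]
  have h3 : ∑ j : Fin ℓ, surjCard ℓ (j.val + 1) * Nat.choose j.val m =
      ∑ i ∈ Finset.range ℓ, surjCard ℓ (i + 1) * Nat.choose i m :=
    Fin.sum_univ_eq_sum_range (fun i => surjCard ℓ (i + 1) * Nat.choose i m) ℓ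
  rw [h3]
  have h4 : Finset.Icc 1 ℓ = Finset.Ico 1 (ℓ + 1) := by rw [Finset.Ico_add_one_right_eq_Icc]
  rw [h4, Finset.sum_Ico_eq_sum_range]
  simp only [Nat.add_sub_cancel]
  apply Finset.sum_congr rfl
  intro i _
  rw [surjCard_eq]
  have : 1 + i - 1 = i := by omega
  rw [this, Nat.add_comm 1 i]
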